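/- Let Z and A be finite nonempty sets, γ ∈ [0,1] a real number, and q ≥ 0 an integer. Let H := ℂ^{A × Z × {0,1}}. For each function f : Z → {0,1}, let O_f be the unitary on H determined on standard basis vectors by O_f |a, z, v⟩ = |a, z, v ⊕ f(z)⟩. Let F : Z → {0,1} be a random function whose values F(z) are independent, each equal to 1 with probability γ, and let N : Z → {0,1} be the constant-zero function. Then for every unitary U on H, every unit vector Ψ₀ ∈ H, and every orthogonal projection Π on H: | E_F[ ‖Π (U O_F)^q Ψ₀‖² ] − ‖Π (U O_N)^q Ψ₀‖² | ≤ 2q√γ. -/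

import Mathlib

set_option linter.unusedSectionVars false
set_option linter.unusedVariables false
set_option maxHeartbeats 1000000

/-- The oracle unitary `O_f` determined on standard basis vectors by
`O_f |a, z, v⟩ = |a, z, v ⊕ f(z)⟩`. -/
noncomputable def oracleOp {A Z : Type*} (f : Z → Bool)
    (Ψ : EuclideanSpace ℂ (A × Z × Bool)) : EuclideanSpace ℂ (A × Z × Bool) :=
  WithLp.toLp 2 (fun p : A × Z × Bool => Ψ (p.1, p.2.1, xor p.2.2 (f p.2.1)))

section Aux

variable {A Z : Type*} [Fintype A] [Fintype Z] [DecidableEq Z]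

/-- The coordinate permutation underlying `oracleOp`. -/
def stmt6_oracleEquiv (f : Z → Bool) : (A × Z × Bool) ≃ (A × Z × Bool) where
  toFun p := (p.1, p.2.1, xor p.2.2 (f p.2.1))
  invFun p := (p.1, p.2.1, xor p.2.2 (f p.2.1))
  left_inv p := by simp [Bool.xor_assoc]
  right_inv p := by simp [Bool.xor_assoc]

lemma stmt6_oracleOp_sub (f : Z → Bool) (x y : EuclideanSpace ℂ (A × Z × Bool)) :
    oracleOp f (x - y) = oracleOp f x - oracleOp f y := rfl

lemma stmt6_oracleOp_false (x : EuclideanSpace ℂ (A × Z × Bool)) :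
    oracleOp (A := A) (fun _ => false) x = x := by
  ext p
  show x (p.1, p.2.1, xor p.2.2 false) = x p
  rw [Bool.xor_false]

lemma stmt6_norm_oracleOp (f : Z → Bool) (x : EuclideanSpace ℂ (A × Z × Bool)) :
    ‖oracleOp f x‖ = ‖x‖ := by
  rw [EuclideanSpace.norm_eq, EuclideanSpace.norm_eq]
  congr 1
  exact Fintype.sum_equiv (stmt6_oracleEquiv (A := A) f) _ _ (fun p => rfl)

lemma stmt6_euclid_norm_sq (x : EuclideanSpace ℂ (A × Z × Bool)) :
    ‖x‖ ^ 2 = ∑ p, ‖x p‖ ^ 2 := by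
  rw [EuclideanSpace.norm_eq, Real.sq_sqrt (by positivity)]

/-- Squared norm of `O_f x - x` as a sum of per-`z` contributions. -/
lemma stmt6_diff_sq (f : Z → Bool) (x : EuclideanSpace ℂ (A × Z × Bool)) :
    ‖oracleOp f x - x‖ ^ 2
      = ∑ z, (if f z then ∑ a, ∑ v, ‖x (a, z, !v) - x (a, z, v)‖ ^ 2 else 0) := by
  rw [stmt6_euclid_norm_sq]
  have hpt : ∀ a : A, ∀ z : Z, ∀ v : Bool, ‖(oracleOp f x - x) (a, z, v)‖ ^ 2
      = if f z then ‖x (a, z, !v) - x (a, z, v)‖ ^ 2 else 0 := by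
    intro a z v
    have e : (oracleOp f x - x) (a, z, v) = x (a, z, xor v (f z)) - x (a, z, v) := rfl
    cases h : f z
    · rw [e, h, Bool.xor_false]; simp
    · rw [e, h, Bool.xor_true]; simp
  rw [Fintype.sum_prod_type, Finset.sum_comm, Fintype.sum_prod_type]
  refine Finset.sum_congr rfl fun z _ => ?_
  simp only [hpt]
  by_cases h : f z
  · simp only [h, if_true]
    rw [Finset.sum_comm]
  · simp [h]

lemma stmt6_sum_W (γ : ℝ) :
    ∑ f : Z → Bool, (∏ z, if f z then γ else 1 - γ) = 1 := by
  rw [← Fintype.prod_sum (fun (_ : Z) (b : Bool) => if b then γ else 1 - γ)]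
  simp

lemma stmt6_W_nonneg (γ : ℝ) (hγ0 : (0:ℝ) ≤ γ) (hγ1 : γ ≤ 1) (f : Z → Bool) :
    0 ≤ ∏ z, if f z then γ else 1 - γ := by
  apply Finset.prod_nonneg
  intro z _
  split <;> linarith

lemma stmt6_exp_ind (γ : ℝ) (c : Z → ℝ) :
    ∑ f : Z → Bool, (∏ z, if f z then γ else 1 - γ) * (∑ z, if f z then c z else 0)
      = γ * ∑ z, c z := by
  have key : ∀ z₀ : Z,
      ∑ f : Z → Bool, (∏ z, if f z then γ else 1 - γ) * (if f z₀ then c z₀ else 0)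
        = γ * c z₀ := by
    intro z₀
    have h1 : ∀ f : Z → Bool,
        (∏ z, if f z then γ else 1 - γ) * (if f z₀ then c z₀ else 0)
          = ∏ z, ((if f z then γ else 1 - γ) *
              (if z = z₀ then (if f z then c z₀ else 0) else 1)) := by
      intro f
      rw [Finset.prod_mul_distrib]
      congr 1
      rw [Finset.prod_ite_eq' Finset.univ z₀ (fun z => if f z then c z₀ else 0)]
      simp
    simp only [h1]
    rw [← Fintype.prod_sum (fun (z : Z) (b : Bool) =>
      (if b then γ else 1 - γ) * (if z = z₀ then (if b then c z₀ else 0) else 1))]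
    have h2 : ∀ z : Z, (∑ b : Bool, (if b then γ else 1 - γ) *
        (if z = z₀ then (if b then c z₀ else 0) else 1))
          = if z = z₀ then γ * c z₀ else 1 := by
      intro z
      by_cases h : z = z₀ <;> simp [h] <;> ring
    simp only [h2]
    rw [Finset.prod_ite_eq' Finset.univ z₀ (fun _ => γ * c z₀)]
    simp
  calc ∑ f : Z → Bool, (∏ z, if f z then γ else 1 - γ) * (∑ z, if f z then c z else 0)
      = ∑ z₀, ∑ f : Z → Bool,
          (∏ z, if f z then γ else 1 - γ) * (if f z₀ then c z₀ else 0) := by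
        simp_rw [Finset.mul_sum]
        rw [Finset.sum_comm]
    _ = ∑ z₀, γ * c z₀ := Finset.sum_congr rfl fun z₀ _ => key z₀
    _ = γ * ∑ z, c z := by rw [Finset.mul_sum]

lemma stmt6_exp_diff_sq (γ : ℝ) (hγ0 : (0:ℝ) ≤ γ) (x : EuclideanSpace ℂ (A × Z × Bool))
    (hx : ‖x‖ = 1) :
    ∑ f : Z → Bool, (∏ z, if f z then γ else 1 - γ) * ‖oracleOp f x - x‖ ^ 2
      ≤ 4 * γ := by
  simp_rw [stmt6_diff_sq]
  rw [stmt6_exp_ind]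
  have hc : ∀ z : Z, (∑ a, ∑ v, ‖x (a, z, !v) - x (a, z, v)‖ ^ 2)
      ≤ 4 * ∑ a, ∑ v : Bool, ‖x (a, z, v)‖ ^ 2 := by
    intro z
    rw [Finset.mul_sum]
    refine Finset.sum_le_sum fun a _ => ?_
    rw [Fintype.sum_bool, Fintype.sum_bool]
    show ‖x (a, z, false) - x (a, z, true)‖ ^ 2 + ‖x (a, z, true) - x (a, z, false)‖ ^ 2
      ≤ 4 * (‖x (a, z, true)‖ ^ 2 + ‖x (a, z, false)‖ ^ 2)
    have h1 := norm_sub_le (x (a, z, true)) (x (a, z, false))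
    have h2 := norm_sub_le (x (a, z, false)) (x (a, z, true))
    have h1' : ‖x (a, z, true) - x (a, z, false)‖ ^ 2
        ≤ (‖x (a, z, true)‖ + ‖x (a, z, false)‖) ^ 2 :=
      pow_le_pow_left₀ (norm_nonneg _) h1 2
    have h2' : ‖x (a, z, false) - x (a, z, true)‖ ^ 2
        ≤ (‖x (a, z, false)‖ + ‖x (a, z, true)‖) ^ 2 :=
      pow_le_pow_left₀ (norm_nonneg _) h2 2
    nlinarith [sq_nonneg (‖x (a, z, true)‖ - ‖x (a, z, false)‖)]
  have hmass : (∑ z, ∑ a, ∑ v : Bool, ‖x (a, z, v)‖ ^ 2) = 1 := by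
    have h := stmt6_euclid_norm_sq x
    rw [hx, one_pow] at h
    simp_rw [Fintype.sum_prod_type] at h
    rw [Finset.sum_comm]
    exact h.symm
  calc γ * ∑ z, ∑ a, ∑ v, ‖x (a, z, !v) - x (a, z, v)‖ ^ 2
      ≤ γ * ∑ z, 4 * ∑ a, ∑ v : Bool, ‖x (a, z, v)‖ ^ 2 :=
        mul_le_mul_of_nonneg_left (Finset.sum_le_sum fun z _ => hc z) hγ0
    _ = 4 * γ := by rw [← Finset.mul_sum, hmass]; ring

lemma stmt6_exp_norm (γ : ℝ) (hγ0 : (0:ℝ) ≤ γ) (hγ1 : γ ≤ 1)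
    (x : EuclideanSpace ℂ (A × Z × Bool)) (hx : ‖x‖ = 1) :
    ∑ f : Z → Bool, (∏ z, if f z then γ else 1 - γ) * ‖oracleOp f x - x‖
      ≤ 2 * Real.sqrt γ := by
  set W : (Z → Bool) → ℝ := fun f => ∏ z, if f z then γ else 1 - γ with hW
  have hWnn : ∀ f, 0 ≤ W f := fun f => stmt6_W_nonneg γ hγ0 hγ1 f
  have cs : (∑ f : Z → Bool, W f * ‖oracleOp f x - x‖) ^ 2
      ≤ (∑ f : Z → Bool, W f) * ∑ f : Z → Bool, W f * ‖oracleOp f x - x‖ ^ 2 := by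
    have h := Finset.sum_mul_sq_le_sq_mul_sq Finset.univ
      (fun f : Z → Bool => Real.sqrt (W f))
      (fun f : Z → Bool => Real.sqrt (W f) * ‖oracleOp f x - x‖)
    have e1 : ∀ f : Z → Bool, Real.sqrt (W f) * (Real.sqrt (W f) * ‖oracleOp f x - x‖)
        = W f * ‖oracleOp f x - x‖ := by
      intro f; rw [← mul_assoc, Real.mul_self_sqrt (hWnn f)]
    have e2 : ∀ f : Z → Bool, Real.sqrt (W f) ^ 2 = W f := fun f => Real.sq_sqrt (hWnn f)
    have e3 : ∀ f : Z → Bool, (Real.sqrt (W f) * ‖oracleOp f x - x‖) ^ 2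
        = W f * ‖oracleOp f x - x‖ ^ 2 := by
      intro f; rw [mul_pow, Real.sq_sqrt (hWnn f)]
    simp only [e1, e2, e3] at h
    exact h
  rw [stmt6_sum_W γ, one_mul] at cs
  have h4 : (∑ f : Z → Bool, W f * ‖oracleOp f x - x‖) ^ 2 ≤ 4 * γ :=
    le_trans cs (stmt6_exp_diff_sq γ hγ0 x hx)
  have hnn : 0 ≤ ∑ f : Z → Bool, W f * ‖oracleOp f x - x‖ :=
    Finset.sum_nonneg fun f _ => mul_nonneg (hWnn f) (norm_nonneg _)
  calc ∑ f : Z → Bool, W f * ‖oracleOp f x - x‖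
      = Real.sqrt ((∑ f : Z → Bool, W f * ‖oracleOp f x - x‖) ^ 2) :=
        (Real.sqrt_sq hnn).symm
    _ ≤ Real.sqrt (4 * γ) := Real.sqrt_le_sqrt h4
    _ = 2 * Real.sqrt γ := by
        rw [Real.sqrt_mul (by norm_num : (0:ℝ) ≤ 4)]
        congr 1
        rw [show (4:ℝ) = 2 ^ 2 by norm_num, Real.sqrt_sq (by norm_num : (0:ℝ) ≤ 2)]

/-- For unit vectors and an orthogonal projection,
`|‖P u‖² - ‖P v‖²| ≤ ‖u - v‖`. -/
lemma stmt6_proj_diff {E : Type*} [NormedAddCommGroup E] [InnerProductSpace ℂ E]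
    (P : E →ₗ[ℂ] E) (hPP : P ∘ₗ P = P)
    (hPsa : ∀ x y, (inner ℂ (P x) y : ℂ) = inner ℂ x (P y))
    (u v : E) (hu : ‖u‖ = 1) (hv : ‖v‖ = 1) :
    |‖P u‖ ^ 2 - ‖P v‖ ^ 2| ≤ ‖u - v‖ := by
  have hpyth : ∀ w : E, ‖w‖ ^ 2 = ‖P w‖ ^ 2 + ‖w - P w‖ ^ 2 := by
    intro w
    have h2 : P (P w) = P w := congrFun (congrArg (fun g => g.toFun) hPP) w
    have horth : (inner ℂ (P w) (w - P w) : ℂ) = 0 := by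
      rw [inner_sub_right, hPsa, hPsa, h2, sub_self]
    have h3 := norm_add_sq_eq_norm_sq_add_norm_sq_of_inner_eq_zero (P w) (w - P w) horth
    have hw : P w + (w - P w) = w := by abel
    rw [hw] at h3
    simpa [pow_two] using h3
  set a := ‖P u‖ with ha_def
  set b := ‖P v‖ with hb_def
  set a' := ‖u - P u‖ with ha'_def
  set b' := ‖v - P v‖ with hb'_def
  have ha : a ^ 2 + a' ^ 2 = 1 := by
    have := hpyth u; rw [hu] at this; simpa using this.symm
  have hb : b ^ 2 + b' ^ 2 = 1 := by
    have := hpyth v; rw [hv] at this; simpa using this.symm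
  have hsplit : ‖u - v‖ ^ 2 = ‖P u - P v‖ ^ 2 + ‖(u - P u) - (v - P v)‖ ^ 2 := by
    have h := hpyth (u - v)
    rw [map_sub] at h
    have he : (u - v) - (P u - P v) = (u - P u) - (v - P v) := by abel
    rw [he] at h
    exact h
  have hab : |a - b| ≤ ‖P u - P v‖ := abs_norm_sub_norm_le _ _
  have ha'b' : |a' - b'| ≤ ‖(u - P u) - (v - P v)‖ := abs_norm_sub_norm_le _ _
  have key : (a ^ 2 - b ^ 2) ^ 2 ≤ (a - b) ^ 2 + (a' - b') ^ 2 := by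
    nlinarith [sq_nonneg (a - b + (a' - b')), sq_nonneg (a - b - (a' - b')),
      sq_nonneg (a + b - (a' + b')), sq_nonneg (a + b + (a' + b')),
      mul_nonneg (mul_nonneg (norm_nonneg (P u)) (norm_nonneg (P v)))
        (mul_nonneg (norm_nonneg (u - P u)) (norm_nonneg (v - P v))),
      sq_nonneg ((a - b) * (a' + b')), sq_nonneg ((a' - b') * (a + b))]
  have key2 : (a ^ 2 - b ^ 2) ^ 2 ≤ ‖u - v‖ ^ 2 := by
    have h1 : (a - b) ^ 2 ≤ ‖P u - P v‖ ^ 2 := by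
      nlinarith [hab, sq_abs (a - b), abs_nonneg (a - b)]
    have h2 : (a' - b') ^ 2 ≤ ‖(u - P u) - (v - P v)‖ ^ 2 := by
      nlinarith [ha'b', sq_abs (a' - b'), abs_nonneg (a' - b')]
    rw [hsplit]; linarith
  calc |a ^ 2 - b ^ 2| = Real.sqrt ((a ^ 2 - b ^ 2) ^ 2) := (Real.sqrt_sq_eq_abs _).symm
    _ ≤ Real.sqrt (‖u - v‖ ^ 2) := Real.sqrt_le_sqrt key2
    _ = ‖u - v‖ := Real.sqrt_sq (norm_nonneg _)

end Aux

theorem stmt6 {A Z : Type*} [Fintype A] [Fintype Z] [DecidableEq Z]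
    [Nonempty A] [Nonempty Z]
    (γ : ℝ) (hγ0 : 0 ≤ γ) (hγ1 : γ ≤ 1) (q : ℕ)
    (U : EuclideanSpace ℂ (A × Z × Bool) ≃ₗᵢ[ℂ] EuclideanSpace ℂ (A × Z × Bool))
    (Ψ₀ : EuclideanSpace ℂ (A × Z × Bool)) (hΨ₀ : ‖Ψ₀‖ = 1)
    (P : EuclideanSpace ℂ (A × Z × Bool) →ₗ[ℂ] EuclideanSpace ℂ (A × Z × Bool))
    (hPP : P ∘ₗ P = P)
    (hPsa : ∀ x y, (inner ℂ (P x) y : ℂ) = inner ℂ x (P y)) :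
    |(∑ f : Z → Bool, (∏ z, if f z then γ else 1 - γ) *
          ‖P ((fun w => U (oracleOp f w))^[q] Ψ₀)‖ ^ 2) -
        ‖P ((fun w => U (oracleOp (fun _ => false) w))^[q] Ψ₀)‖ ^ 2|
      ≤ 2 * q * Real.sqrt γ := by
  set W : (Z → Bool) → ℝ := fun f => ∏ z, if f z then γ else 1 - γ with hW_def
  have hWnn : ∀ f, 0 ≤ W f := fun f => stmt6_W_nonneg γ hγ0 hγ1 f
  have hW1 : ∑ f : Z → Bool, W f = 1 := stmt6_sum_W γ
  -- norms of iterates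
  have hstep : ∀ (f : Z → Bool) (w : EuclideanSpace ℂ (A × Z × Bool)),
      ‖U (oracleOp f w)‖ = ‖w‖ := by
    intro f w
    rw [U.norm_map, stmt6_norm_oracleOp]
  have hiter : ∀ (f : Z → Bool) (j : ℕ),
      ‖(fun w => U (oracleOp f w))^[j] Ψ₀‖ = 1 := by
    intro f j
    induction j with
    | zero => simpa using hΨ₀
    | succ j ih =>
      rw [Function.iterate_succ_apply']
      rw [hstep]
      exact ih
  -- hybrid argument
  have hybrid : ∀ (f : Z → Bool) (k : ℕ),
      ‖(fun w => U (oracleOp f w))^[k] Ψ₀ -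
          (fun w => U (oracleOp (fun _ => false) w))^[k] Ψ₀‖
        ≤ ∑ j ∈ Finset.range k,
            ‖oracleOp f ((fun w => U (oracleOp (fun _ => false) w))^[j] Ψ₀) -
              (fun w => U (oracleOp (fun _ => false) w))^[j] Ψ₀‖ := by
    intro f k
    induction k with
    | zero => simp
    | succ k ih =>
      rw [Function.iterate_succ_apply', Function.iterate_succ_apply',
        Finset.sum_range_succ]
      set aa := (fun w => U (oracleOp f w))^[k] Ψ₀ with haa
      set bb := (fun w => U (oracleOp (fun _ => false) w))^[k] Ψ₀ with hbb
      have e1 : U (oracleOp f aa) - U (oracleOp (fun _ => false) bb)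
          = U (oracleOp f aa - bb) := by
        rw [stmt6_oracleOp_false, ← map_sub]
      calc ‖U (oracleOp f aa) - U (oracleOp (fun _ => false) bb)‖
          = ‖oracleOp f aa - bb‖ := by rw [e1, U.norm_map]
        _ = ‖(oracleOp f aa - oracleOp f bb) + (oracleOp f bb - bb)‖ := by
            congr 1; abel
        _ ≤ ‖oracleOp f aa - oracleOp f bb‖ + ‖oracleOp f bb - bb‖ := norm_add_le _ _
        _ = ‖aa - bb‖ + ‖oracleOp f bb - bb‖ := by
            rw [← stmt6_oracleOp_sub, stmt6_norm_oracleOp]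
        _ ≤ (∑ j ∈ Finset.range k,
              ‖oracleOp f ((fun w => U (oracleOp (fun _ => false) w))^[j] Ψ₀) -
                (fun w => U (oracleOp (fun _ => false) w))^[j] Ψ₀‖)
            + ‖oracleOp f bb - bb‖ := by
            exact add_le_add_left ih _
  -- assemble
  set ΨN : EuclideanSpace ℂ (A × Z × Bool) :=
    (fun w => U (oracleOp (fun _ => false) w))^[q] Ψ₀ with hΨN
  have step1 : (∑ f : Z → Bool, W f * ‖P ((fun w => U (oracleOp f w))^[q] Ψ₀)‖ ^ 2)
        - ‖P ΨN‖ ^ 2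
      = ∑ f : Z → Bool, W f *
          (‖P ((fun w => U (oracleOp f w))^[q] Ψ₀)‖ ^ 2 - ‖P ΨN‖ ^ 2) := by
    rw [Finset.sum_congr rfl (fun f _ => mul_sub (W f)
      (‖P ((fun w => U (oracleOp f w))^[q] Ψ₀)‖ ^ 2) (‖P ΨN‖ ^ 2)),
      Finset.sum_sub_distrib, ← Finset.sum_mul, hW1, one_mul]
  rw [step1]
  calc |∑ f : Z → Bool, W f *
        (‖P ((fun w => U (oracleOp f w))^[q] Ψ₀)‖ ^ 2 - ‖P ΨN‖ ^ 2)|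
      ≤ ∑ f : Z → Bool, |W f *
        (‖P ((fun w => U (oracleOp f w))^[q] Ψ₀)‖ ^ 2 - ‖P ΨN‖ ^ 2)| :=
        Finset.abs_sum_le_sum_abs _ _
    _ ≤ ∑ f : Z → Bool, W f * ‖(fun w => U (oracleOp f w))^[q] Ψ₀ - ΨN‖ := by
        refine Finset.sum_le_sum fun f _ => ?_
        rw [abs_mul, abs_of_nonneg (hWnn f)]
        exact mul_le_mul_of_nonneg_left
          (stmt6_proj_diff P hPP hPsa _ _ (hiter f q) (hiter _ q)) (hWnn f)
    _ ≤ ∑ f : Z → Bool, W f * ∑ j ∈ Finset.range q,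
          ‖oracleOp f ((fun w => U (oracleOp (fun _ => false) w))^[j] Ψ₀) -
            (fun w => U (oracleOp (fun _ => false) w))^[j] Ψ₀‖ := by
        refine Finset.sum_le_sum fun f _ => ?_
        exact mul_le_mul_of_nonneg_left (hybrid f q) (hWnn f)
    _ = ∑ j ∈ Finset.range q, ∑ f : Z → Bool, W f *
          ‖oracleOp f ((fun w => U (oracleOp (fun _ => false) w))^[j] Ψ₀) -
            (fun w => U (oracleOp (fun _ => false) w))^[j] Ψ₀‖ := by
        simp_rw [Finset.mul_sum]
        rw [Finset.sum_comm]
    _ ≤ ∑ j ∈ Finset.range q, 2 * Real.sqrt γ := by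
        refine Finset.sum_le_sum fun j _ => ?_
        exact stmt6_exp_norm γ hγ0 hγ1 _ (hiter _ j)
    _ = q * (2 * Real.sqrt γ) := by
        rw [Finset.sum_const, Finset.card_range, nsmul_eq_mul]
    _ = 2 * q * Real.sqrt γ := by ring
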